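/- Let π_z and π_{z'} be two partial injective votes over the same candidate set, and suppose candidate c is placed by π_z at position j' but not placed by π_{z'}. Construct the bipartite graph B whose left vertices are candidates placed by π_{z'} at positions > j̄, whose right vertices are candidates placed by π_z at positions > j̄, with an edge between two vertices iff they represent the same candidate or they occupy the same position (> j̄) in the two votes but are distinct candidates. Then B has maximum degree 2, and there exists in B a simple path from c to some candidate placed by π_{z'} but not by π_z at positions > j̄. -/

import Mathlib

/-- The auxiliary bipartite switching graph.  `pz' a` (resp. `pz b`) is the
position at which the partial vote `π_{z'}` (resp. `π_z`) places candidate `a`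
(resp. `b`), if any.  A left vertex `inl a` and a right vertex `inr b` are
related when both candidates are placed at positions above `j̄` in the
respective votes and either they are the same candidate or they occupy the
same position. -/
def switchRel {m n : ℕ} (pz pz' : Fin m → Option (Fin n)) (jbar : Fin n) :
    (Fin m ⊕ Fin m) → (Fin m ⊕ Fin m) → Prop :=
  fun u v =>
    match u, v with
    | Sum.inl a, Sum.inr b =>
        (∃ ja, pz' a = some ja ∧ jbar < ja) ∧
        (∃ jb, pz b = some jb ∧ jbar < jb) ∧
        (a = b ∨ pz' a = pz b)
    | _, _ => False

/-- The switching graph has maximum degree 2 and contains a simple path from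
`c` (a candidate placed by `π_z` above `j̄` but not placed by `π_{z'}`) to some
candidate placed by `π_{z'}` above `j̄` but not placed by `π_z` above `j̄`. -/
theorem switch_graph_path {m n : ℕ}
    (pz pz' : Fin m → Option (Fin n))
    (hinjz : ∀ a a' : Fin m, pz a ≠ none → pz a = pz a' → a = a')
    (hinjz' : ∀ a a' : Fin m, pz' a ≠ none → pz' a = pz' a' → a = a')
    (jbar : Fin n)
    (hfullz : ∀ j : Fin n, jbar < j → ∃ a, pz a = some j)
    (hfullz' : ∀ j : Fin n, jbar < j → ∃ a, pz' a = some j)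
    (c : Fin m) (j' : Fin n)
    (hc : pz c = some j') (hj' : jbar < j') (hc' : pz' c = none) :
    (∀ v, ((SimpleGraph.fromRel (switchRel pz pz' jbar)).neighborSet v).ncard ≤ 2) ∧
    (∃ d : Fin m,
      (∃ jd, pz' d = some jd ∧ jbar < jd) ∧
      ¬(∃ jd, pz d = some jd ∧ jbar < jd) ∧
      ∃ w : (SimpleGraph.fromRel (switchRel pz pz' jbar)).Walk
          (Sum.inr c) (Sum.inl d), w.IsPath) := by
  classical
  set G := SimpleGraph.fromRel (switchRel pz pz' jbar) with hGdef
  have hadj : ∀ u v, G.Adj u v ↔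
      u ≠ v ∧ (switchRel pz pz' jbar u v ∨ switchRel pz pz' jbar v u) := by
    intro u v
    exact SimpleGraph.fromRel_adj _ _ _
  constructor
  · -- max degree 2
    intro v
    have hsub : ∃ x y : Fin m ⊕ Fin m, G.neighborSet v ⊆ {x, y} := by
      rcases v with a | b
      · by_cases hb : ∃ b0 jb0, pz b0 = some jb0 ∧ pz' a = some jb0
        · obtain ⟨b0, jb0, hb0, hb0'⟩ := hb
          refine ⟨Sum.inr a, Sum.inr b0, ?_⟩
          intro u hu
          rw [SimpleGraph.mem_neighborSet, hadj] at hu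
          obtain ⟨hne, h | h⟩ := hu
          · rcases u with b | b
            · exact h.elim
            · obtain ⟨⟨ja, hja, _⟩, ⟨jb, hjb, _⟩, hab⟩ := h
              rcases hab with rfl | hab
              · exact Set.mem_insert _ _
              · have hbne : pz b ≠ none := by rw [← hab, hja]; simp
                have hbb0 : b = b0 := by
                  apply hinjz b b0 hbne
                  rw [← hab, hja, hb0, ← hb0', hja]
                subst hbb0
                exact Set.mem_insert_iff.mpr (Or.inr rfl)
          · rcases u with b | b <;> exact h.elim
        · refine ⟨Sum.inr a, Sum.inr a, ?_⟩
          intro u hu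
          rw [SimpleGraph.mem_neighborSet, hadj] at hu
          obtain ⟨hne, h | h⟩ := hu
          · rcases u with b | b
            · exact h.elim
            · obtain ⟨⟨ja, hja, _⟩, ⟨jb, hjb, _⟩, hab⟩ := h
              rcases hab with rfl | hab
              · exact Set.mem_insert _ _
              · exact absurd ⟨b, ja, by rw [← hab, hja], hja⟩ hb
          · rcases u with b | b <;> exact h.elim
      · by_cases ha : ∃ a0 ja0, pz' a0 = some ja0 ∧ pz b = some ja0
        · obtain ⟨a0, ja0, ha0, ha0'⟩ := ha
          refine ⟨Sum.inl b, Sum.inl a0, ?_⟩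
          intro u hu
          rw [SimpleGraph.mem_neighborSet, hadj] at hu
          obtain ⟨hne, h | h⟩ := hu
          · rcases u with a | a <;> exact h.elim
          · rcases u with a | a
            · obtain ⟨⟨ja, hja, _⟩, ⟨jb, hjb, _⟩, hab⟩ := h
              rcases hab with rfl | hab
              · exact Set.mem_insert _ _
              · have hane : pz' a ≠ none := by rw [hja]; simp
                have haa0 : a = a0 := by
                  apply hinjz' a a0 hane
                  rw [hab, hjb, ha0, ← ha0', hjb]
                subst haa0
                exact Set.mem_insert_iff.mpr (Or.inr rfl)
            · exact h.elim
        · refine ⟨Sum.inl b, Sum.inl b, ?_⟩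
          intro u hu
          rw [SimpleGraph.mem_neighborSet, hadj] at hu
          obtain ⟨hne, h | h⟩ := hu
          · rcases u with a | a <;> exact h.elim
          · rcases u with a | a
            · obtain ⟨⟨ja, hja, _⟩, ⟨jb, hjb, _⟩, hab⟩ := h
              rcases hab with rfl | hab
              · exact Set.mem_insert _ _
              · exact absurd ⟨a, jb, hab.trans hjb, hjb⟩ ha
            · exact h.elim
    obtain ⟨x, y, hxy⟩ := hsub
    refine le_trans (Set.ncard_le_ncard hxy (Set.toFinite _)) ?_
    refine le_trans (Set.ncard_insert_le _ _) ?_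
    simp [Set.ncard_singleton]
  · -- the path
    set R : Fin m → Fin m → Prop :=
      fun x y => ∃ j, pz' x = some j ∧ pz y = some j ∧ jbar < j with hRdef
    -- main induction on fuel
    have key : ∀ k : ℕ, ∀ (a : Fin m) (rest : List (Fin m)),
        m ≤ (a :: rest).length + k →
        ((a :: rest) ++ [c]).Nodup →
        List.Chain' R ((a :: rest) ++ [c]) →
        ∀ (w : G.Walk (Sum.inr c) (Sum.inl a)), w.IsPath →
        (∀ v, v ∈ w.support ↔ v = Sum.inr c ∨ v = Sum.inl a ∨
          (∃ x ∈ rest, v = Sum.inl x) ∨ (∃ x ∈ rest, v = Sum.inr x)) →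
        ∃ d : Fin m,
          (∃ jd, pz' d = some jd ∧ jbar < jd) ∧
          ¬(∃ jd, pz d = some jd ∧ jbar < jd) ∧
          ∃ w : G.Walk (Sum.inr c) (Sum.inl d), w.IsPath := by
      intro k
      induction k with
      | zero =>
        intro a rest hlen hnd hch w hw hsupp
        exfalso
        have h1 : ((a :: rest) ++ [c]).length ≤ m := by
          simpa using hnd.length_le_card
        simp only [List.length_append, List.length_cons, List.length_singleton] at h1
        simp only [List.length_cons, Nat.add_zero] at hlen
        omega
      | succ k ih =>
        intro a rest hlen hnd hch w hw hsupp
        -- extract: pz' a is placed above jbar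
        have hpza' : ∃ ja, pz' a = some ja ∧ jbar < ja := by
          have : ∃ y l, (a :: rest) ++ [c] = a :: y :: l := by
            cases rest with
            | nil => exact ⟨c, [], rfl⟩
            | cons b t => exact ⟨b, t ++ [c], rfl⟩
          obtain ⟨y, l, hyl⟩ := this
          rw [hyl] at hch
          obtain ⟨j, hj1, _, hj3⟩ := (List.isChain_cons_cons.mp hch).1
          exact ⟨j, hj1, hj3⟩
        by_cases hpa : ∃ j, pz a = some j ∧ jbar < j
        · -- extend the path
          obtain ⟨j, hja, hjlt⟩ := hpa
          obtain ⟨b, hb⟩ := hfullz' j hjlt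
          -- b is not c
          have hbc : b ≠ c := by
            intro hbc; rw [hbc, hc'] at hb; cases hb
          -- nodup facts
          have hndL : (a :: rest).Nodup := (List.nodup_append.mp hnd).1
          have hcL : c ∉ a :: rest := by
            have := (List.nodup_append'.mp hnd).2.2
            intro hcc
            exact this hcc (List.mem_singleton_self c)
          -- b is not in a :: rest
          have hbL : b ∉ a :: rest := by
            intro hbmem
            obtain ⟨L₁, L₂, hsplit⟩ := List.append_of_mem hbmem
            have hsuf : List.Chain' R (b :: (L₂ ++ [c])) := by
              refine hch.suffix ⟨L₁, ?_⟩
              rw [hsplit]; simp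
            obtain ⟨y, l', hyl'⟩ : ∃ y l', L₂ ++ [c] = y :: l' := by
              cases L₂ with
              | nil => exact ⟨c, [], rfl⟩
              | cons y t => exact ⟨y, t ++ [c], rfl⟩
            rw [hyl'] at hsuf
            obtain ⟨j2, hbj2, hyj2, _⟩ := (List.isChain_cons_cons.mp hsuf).1
            rw [hb] at hbj2
            have hj2 : j2 = j := by injection hbj2.symm
            subst hj2
            have hya : y = a := by
              apply hinjz y a (by rw [hyj2]; simp)
              rw [hyj2, hja]
            cases L₂ with
            | nil =>
              have hyc : y = c := by
                rw [List.nil_append] at hyl'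
                injection hyl' with h1 h2
                exact h1.symm
              have hac : a = c := hya.symm.trans hyc
              apply hcL
              rw [← hac]
              exact List.mem_cons_self
            | cons y0 L₂' =>
              have hy0a : y0 = a := by
                rw [List.cons_append] at hyl'
                injection hyl' with h1 h2
                exact h1.trans hya
              have haRest : a ∈ rest := by
                cases L₁ with
                | nil =>
                  rw [List.nil_append] at hsplit
                  injection hsplit with h1 h2
                  rw [h2, ← hy0a]
                  exact List.mem_cons_self
                | cons x L₁' =>
                  rw [List.cons_append] at hsplit
                  injection hsplit with h1 h2
                  rw [h2, ← hy0a]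
                  exact List.mem_append_right _ (List.mem_cons_of_mem _ List.mem_cons_self)
              exact (List.nodup_cons.mp hndL).1 haRest
          -- the two new edges
          have h1 : G.Adj (Sum.inl a) (Sum.inr a) := by
            rw [hadj]
            refine ⟨by simp, Or.inl ?_⟩
            exact ⟨hpza', ⟨j, hja, hjlt⟩, Or.inl rfl⟩
          have h2 : G.Adj (Sum.inr a) (Sum.inl b) := by
            rw [hadj]
            refine ⟨by simp, Or.inr ?_⟩
            exact ⟨⟨j, hb, hjlt⟩, ⟨j, hja, hjlt⟩, Or.inr (by rw [hb, hja])⟩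
          set w' : G.Walk (Sum.inr c) (Sum.inl b) := (w.concat h1).concat h2 with hw'def
          have hsupp' : w'.support = (w.support ++ [Sum.inr a]) ++ [Sum.inl b] := by
            rw [hw'def, SimpleGraph.Walk.support_concat, SimpleGraph.Walk.support_concat]
          -- the new vertices are fresh
          have hfresh1 : (Sum.inr a : Fin m ⊕ Fin m) ∉ w.support := by
            rw [hsupp]
            push_neg
            refine ⟨?_, ?_, ?_, ?_⟩
            · intro hcc
              have : a = c := by injection hcc
              exact hcL (this ▸ List.mem_cons_self)
            · simp
            · intro x _ hxx; cases hxx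
            · intro x hx hxx
              have : a = x := by injection hxx
              subst this
              have : a ∉ rest := by simp at hndL; exact hndL.1
              exact this hx
          have hfresh2 : (Sum.inl b : Fin m ⊕ Fin m) ∉ w.support := by
            rw [hsupp]
            push_neg
            refine ⟨by simp, ?_, ?_, ?_⟩
            · intro hab
              have : b = a := by injection hab
              exact hbL (this ▸ List.mem_cons_self)
            · intro x hx hxx
              have : b = x := by injection hxx
              subst this
              exact hbL (List.mem_cons_of_mem _ hx)
            · intro x _ hxx; cases hxx
          have hw' : w'.IsPath := by
            rw [SimpleGraph.Walk.isPath_def, hsupp']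
            rw [List.nodup_append', List.nodup_append']
            refine ⟨⟨hw.support_nodup, List.nodup_singleton _, ?_⟩,
              List.nodup_singleton _, ?_⟩
            · intro x hx hx2
              rw [List.mem_singleton] at hx2
              subst hx2
              exact hfresh1 hx
            · intro x hx hx2
              rw [List.mem_singleton] at hx2
              subst hx2
              rcases List.mem_append.mp hx with hx | hx
              · exact hfresh2 hx
              · rw [List.mem_singleton] at hx
                cases hx
          -- apply the induction hypothesis with list b :: a :: rest
          refine ih b (a :: rest) ?_ ?_ ?_ w' hw' ?_
          · simp only [List.length_cons] at hlen ⊢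
            omega
          · rw [List.cons_append, List.nodup_cons]
            constructor
            · intro hbmem
              rcases List.mem_append.mp hbmem with h | h
              · exact hbL h
              · rw [List.mem_singleton] at h; exact hbc h
            · exact hnd
          · rw [List.cons_append]
            refine List.IsChain.cons hch ?_
            intro y hy
            have : y = a := by
              cases rest <;> simp at hy <;> exact hy.symm
            subst this
            exact ⟨j, hb, hja, hjlt⟩
          · intro v
            rw [hsupp']
            simp only [List.mem_append, List.mem_singleton, hsupp v, List.mem_cons,
              List.not_mem_nil, or_false, exists_eq_or_imp]
            itauto
        · -- terminate: a is the sought d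
          exact ⟨a, hpza', hpa, w, hw⟩
    -- initialize
    obtain ⟨a₁, ha₁⟩ := hfullz' j' hj'
    have hinit : G.Adj (Sum.inr c) (Sum.inl a₁) := by
      rw [hadj]
      refine ⟨by simp, Or.inr ?_⟩
      exact ⟨⟨j', ha₁, hj'⟩, ⟨j', hc, hj'⟩, Or.inr (by rw [ha₁, hc])⟩
    set w₀ : G.Walk (Sum.inr c) (Sum.inl a₁) :=
      SimpleGraph.Walk.cons hinit SimpleGraph.Walk.nil with hw₀def
    have ha₁c : a₁ ≠ c := by
      intro h; rw [h, hc'] at ha₁; cases ha₁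
    refine key m a₁ [] (by simp) ?_ ?_ w₀ ?_ ?_
    · simp [ha₁c]
    · simp only [List.nil_append, List.cons_append, List.isChain_cons_cons,
        List.isChain_singleton, and_true]
      exact List.isChain_cons_cons.mpr ⟨⟨j', ha₁, hc, hj'⟩, List.isChain_singleton _⟩
    · rw [SimpleGraph.Walk.isPath_def, hw₀def]
      simp
    · intro v
      rw [hw₀def]
      simp only [SimpleGraph.Walk.support_cons, SimpleGraph.Walk.support_nil,
        List.mem_cons, List.not_mem_nil, or_false, List.mem_singleton]
      simp only [List.not_mem_nil, false_and, exists_false, or_false]
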